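/- Let G be a connected graph that contains no tree with more than r leaves as a subgraph. If G contains a vertex-disjoint collection of stars K_{1,r_1}, ..., K_{1,r_p} as subgraphs with each r_i \ge 3, then \sum_{i=1}^p r_i \le 3r (and in particular p \le r). -/

import Mathlib

open Finset SimpleGraph

/-- The set of leaves of a subgraph: vertices of the subgraph with exactly one neighbor. -/
def subgraphLeaves {V : Type*} {G : SimpleGraph V} (H : G.Subgraph) : Set V :=
  {v ∈ H.verts | (H.neighborSet v).ncard = 1}

open SimpleGraph in
private lemma connected_sdiff_of_reachable {W : Type*} {K : SimpleGraph W} (hK : K.Connected)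
    {a b : W} (hre : (K \ fromEdgeSet {s(a, b)}).Reachable a b) :
    (K \ fromEdgeSet {s(a, b)}).Connected := by
  rw [connected_iff]
  refine ⟨fun x y => ?_, hK.nonempty⟩
  obtain ⟨p⟩ := hK.preconnected x y
  induction p with
  | nil => exact Reachable.refl _
  | @cons x z y h q ih =>
    refine Reachable.trans ?_ ih
    by_cases he : s(x, z) = s(a, b)
    · rw [Sym2.eq_iff] at he
      rcases he with ⟨rfl, rfl⟩ | ⟨rfl, rfl⟩
      · exact hre
      · exact hre.symm
    · exact Adj.reachable (by simp [h, he])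

open SimpleGraph in
private lemma first_edge_mem {W : Type*} {K : SimpleGraph W} {x y : W} (p : K.Walk x y)
    (hp : ¬ p.Nil) : s(x, p.getVert 1) ∈ p.edges := by
  cases p with
  | nil => simp at hp
  | cons h q => simp [Walk.getVert_cons_succ]

open SimpleGraph in
private lemma cycle_exists_two_edges {W : Type*} {K : SimpleGraph W} {v : W} {p : K.Walk v v}
    (hp : p.IsCycle) :
    ∃ w₁ w₂ : W, w₁ ≠ w₂ ∧ s(v, w₁) ∈ p.edges ∧ s(v, w₂) ∈ p.edges := by
  cases p with
  | nil => exact absurd rfl hp.ne_nil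
  | @cons _ z _ h q =>
    have hqrev : ¬ q.reverse.Nil := Walk.not_nil_of_ne h.ne
    have hmem : s(v, q.reverse.getVert 1) ∈ q.edges := by
      have h1 := first_edge_mem q.reverse hqrev
      rwa [Walk.edges_reverse, List.mem_reverse] at h1
    have hnodup := hp.isCircuit.isTrail.edges_nodup
    rw [Walk.edges_cons] at hnodup
    refine ⟨z, q.reverse.getVert 1, fun hzz => ?_, by simp, List.mem_cons_of_mem _ hmem⟩
    have heq : s(v, z) = s(v, q.reverse.getVert 1) := congrArg (fun t => s(v, t)) hzz
    exact (List.nodup_cons.mp hnodup).1 (by rw [heq]; exact hmem)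

/-- If a connected graph contains no subtree with more than `r` leaves, and it contains
a vertex-disjoint collection of stars `K_{1,r_i}` with each `r_i ≥ 3`, then
`∑ r_i ≤ 3r` and `p ≤ r`. -/
theorem star_packing_bound {V : Type*} [Fintype V] [DecidableEq V]
    (G : SimpleGraph V) (hG : G.Connected) (r : ℕ) (hr : 0 < r)
    (hleaves : ∀ H : G.Subgraph, H.coe.IsTree → (subgraphLeaves H).ncard ≤ r)
    (p : ℕ) (rfun : Fin p → ℕ) (c : Fin p → V) (S : Fin p → Finset V)
    (hr3 : ∀ i, 3 ≤ rfun i)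
    (hScard : ∀ i, (S i).card = rfun i)
    (hcS : ∀ i, c i ∉ S i)
    (hadj : ∀ i, ∀ v ∈ S i, G.Adj (c i) v)
    (hdisj : ∀ i j, i ≠ j → Disjoint (insert (c i) (S i)) (insert (c j) (S j))) :
    ∑ i, rfun i ≤ 3 * r ∧ p ≤ r := by
  classical
  rcases Nat.eq_zero_or_pos p with hp0 | hp0
  · subst hp0
    simp
  -- basic disjointness facts
  have hcne : ∀ i j : Fin p, ∀ y ∈ S i, y ≠ c j := by
    intro i j y hy
    rcases eq_or_ne i j with rfl | hij
    · exact fun h => hcS i (h ▸ hy)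
    · intro h
      exact Finset.disjoint_left.mp (hdisj i j hij) (Finset.mem_insert_of_mem hy)
        (by rw [h]; exact Finset.mem_insert_self _ _)
  have hSint : ∀ i j : Fin p, ∀ y : V, y ∈ S i → y ∈ S j → i = j := by
    intro i j y h1 h2
    by_contra hij
    exact Finset.disjoint_left.mp (hdisj i j hij) (Finset.mem_insert_of_mem h1)
      (Finset.mem_insert_of_mem h2)
  have hcinj : Function.Injective c := by
    intro i j hij
    by_contra hne
    exact Finset.disjoint_left.mp (hdisj i j hne) (Finset.mem_insert_self _ _)
      (by rw [hij]; exact Finset.mem_insert_self _ _)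
  -- the set of star edges
  set starE : Set (Sym2 V) := {e | ∃ i, ∃ v ∈ S i, e = s(c i, v)} with hstarEdef
  -- minimization over connected spanning subgraphs containing all star edges
  set Kset : Set ℕ := {n | ∃ H : G.Subgraph,
      (H.verts = Set.univ ∧ H.coe.Connected ∧ starE ⊆ H.edgeSet) ∧ H.edgeSet.ncard = n}
    with hKsetdef
  have hKne : Kset.Nonempty := by
    refine ⟨(⊤ : G.Subgraph).edgeSet.ncard, ⊤, ⟨?_, ?_, ?_⟩, rfl⟩
    · exact Subgraph.verts_top
    · exact Subgraph.topIso.connected_iff.mpr hG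
    · rintro e ⟨i, v, hv, rfl⟩
      simpa [Subgraph.mem_edgeSet] using hadj i v hv
  obtain ⟨H, ⟨hverts, hconn, hstar⟩, hHcard⟩ := Nat.sInf_mem hKne
  have hmin : ∀ H' : G.Subgraph,
      (H'.verts = Set.univ ∧ H'.coe.Connected ∧ starE ⊆ H'.edgeSet) →
      H.edgeSet.ncard ≤ H'.edgeSet.ncard := by
    intro H' hP'
    rw [hHcard]
    exact Nat.sInf_le ⟨H', hP', rfl⟩
  -- H is acyclic, hence a tree
  have hacyc : H.coe.IsAcyclic := by
    intro v₀ p₀ hcyc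
    -- there is an edge of the cycle which is not a star edge
    have key : ∃ a b : ↥H.verts, s(a, b) ∈ p₀.edges ∧ s((a : V), (b : V)) ∉ starE := by
      by_contra hk
      push_neg at hk
      obtain ⟨w₁, w₂, hne12, he₁, he₂⟩ := cycle_exists_two_edges hcyc
      obtain ⟨i, u, hu, hequ⟩ := hk v₀ w₁ he₁
      rw [Sym2.eq_iff] at hequ
      have hy : ∃ y : ↥H.verts, y ∈ p₀.support ∧ ∃ i, (y : V) ∈ S i := by
        rcases hequ with ⟨h1, h2⟩ | ⟨h1, h2⟩
        · exact ⟨w₁, Walk.snd_mem_support_of_mem_edges _ he₁, i, h2 ▸ hu⟩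
        · exact ⟨v₀, Walk.start_mem_support _, i, h1 ▸ hu⟩
      obtain ⟨y, hysup, i, hyS⟩ := hy
      have hcyc₁ := hcyc.rotate hysup
      obtain ⟨x₁, x₂, hx12, hx1, hx2⟩ := cycle_exists_two_edges hcyc₁
      have hcx : ∀ x : ↥H.verts, s(y, x) ∈ (p₀.rotate y hysup).edges → (x : V) = c i := by
        intro x hx
        obtain ⟨j, u', hu', hequ'⟩ := hk y x ((Walk.rotate_edges p₀ y hysup).mem_iff.mp hx)
        rw [Sym2.eq_iff] at hequ'
        rcases hequ' with ⟨h1, h2⟩ | ⟨h1, h2⟩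
        · exact absurd h1 (hcne i j _ hyS)
        · have hji : j = i := hSint j i _ (by rw [h1]; exact hu') hyS
          rw [h2, hji]
      exact hx12 (Subtype.val_injective ((hcx x₁ hx1).trans (hcx x₂ hx2).symm))
    obtain ⟨a, b, hmem, hnstar⟩ := key
    have hHadj : H.Adj ↑a ↑b := (p₀.edges_subset_edgeSet hmem : H.coe.Adj a b)
    have he'mem : s((a : V), (b : V)) ∈ H.edgeSet := hHadj
    have hedge' : (H.deleteEdges {s((a : V), (b : V))}).edgeSet
        = H.edgeSet \ {s((a : V), (b : V))} := by
      ext f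
      induction f using Sym2.ind with
      | _ x y =>
        simp [Subgraph.mem_edgeSet, Subgraph.deleteEdges_adj]
    have hpre : (Sym2.map (Subtype.val : ↥H.verts → V)) ⁻¹' {s((a : V), (b : V))} =
        {s(a, b)} := by
      ext f
      constructor
      · intro hf
        have hf' : Sym2.map (Subtype.val : ↥H.verts → V) f
            = Sym2.map Subtype.val s(a, b) := by simpa using hf
        simpa using Sym2.map.injective Subtype.val_injective hf'
      · rintro rfl
        simp
    have hconn' : (H.deleteEdges {s((a : V), (b : V))}).coe.Connected := by
      have hco : (H.deleteEdges {s((a : V), (b : V))}).coe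
          = H.coe \ fromEdgeSet {s(a, b)} := by
        rw [Subgraph.coe_deleteEdges_eq, hpre]
        rfl
      rw [hco]
      have hrr := (adj_and_reachable_delete_edges_iff_exists_cycle (G := H.coe)).mpr
        ⟨v₀, p₀, hcyc, hmem⟩
      exact connected_sdiff_of_reachable hconn hrr.2
    have hP' : (H.deleteEdges {s((a : V), (b : V))}).verts = Set.univ
        ∧ (H.deleteEdges {s((a : V), (b : V))}).coe.Connected
        ∧ starE ⊆ (H.deleteEdges {s((a : V), (b : V))}).edgeSet := by
      refine ⟨by rw [Subgraph.deleteEdges_verts, hverts], hconn', ?_⟩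
      intro e he
      rw [hedge']
      exact ⟨hstar he, fun h => hnstar (by rwa [← Set.mem_singleton_iff.mp h])⟩
    have hlt : (H.deleteEdges {s((a : V), (b : V))}).edgeSet.ncard < H.edgeSet.ncard := by
      rw [hedge']
      exact Set.ncard_diff_singleton_lt_of_mem he'mem (Set.toFinite _)
    exact absurd (hmin _ hP') (by omega)
  have htree : H.coe.IsTree := ⟨hconn, hacyc⟩
  have hLr := hleaves H htree
  -- counting, on the spanning coercion
  have hmemV : ∀ v : V, v ∈ H.verts := fun v => by rw [hverts]; trivial
  have φ : H.coe ≃g H.spanningCoe :=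
    ⟨Equiv.subtypeUnivEquiv hmemV, by
      intro a b
      rfl⟩
  have htreeT : H.spanningCoe.IsTree := by
    refine ⟨φ.connected_iff.mp hconn, ?_⟩
    intro v q hq
    have hinj : Function.Injective (φ.symm.toHom : H.spanningCoe →g H.coe) := φ.symm.injective
    exact hacyc _ ((Walk.map_isCycle_iff_of_injective hinj).mpr hq)
  have hstaradj : ∀ i : Fin p, ∀ v ∈ S i, H.Adj (c i) v := by
    intro i v hv
    exact hstar ⟨i, v, hv, rfl⟩
  have hdegV : ∀ v : V, H.spanningCoe.degree v = (H.neighborSet v).ncard := by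
    intro v
    rw [Subgraph.degree_spanningCoe, ← Subgraph.finset_card_neighborSet_eq_degree,
      ← Set.ncard_eq_toFinset_card']
  -- at least two vertices
  have hcard2 : 2 ≤ Fintype.card V := by
    have i0 : Fin p := ⟨0, hp0⟩
    obtain ⟨s0, hs0⟩ : (S i0).Nonempty := Finset.card_pos.mp (by rw [hScard]; have := hr3 i0; omega)
    exact Fintype.one_lt_card_iff_nontrivial.mpr ⟨c i0, s0, (hcne i0 i0 s0 hs0).symm⟩
  -- minimum degree one
  have hdeg1 : ∀ v : V, 1 ≤ H.spanningCoe.degree v := by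
    intro v
    obtain ⟨u, hu⟩ := Fintype.exists_ne_of_one_lt_card (by omega) v
    obtain ⟨q⟩ := htreeT.isConnected.preconnected v u
    cases q with
    | nil => exact absurd rfl hu
    | cons h q' => exact (H.spanningCoe.degree_pos_iff_exists_adj v).mpr ⟨_, h⟩
  -- handshake and edge count
  have hsum : ∑ v : V, H.spanningCoe.degree v = 2 * (H.spanningCoe.edgeFinset.card) :=
    SimpleGraph.sum_degrees_eq_twice_card_edges _
  have hEn : H.spanningCoe.edgeFinset.card + 1 = Fintype.card V := htreeT.card_edgeFinset
  -- center degrees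
  have hdegc : ∀ i, rfun i ≤ H.spanningCoe.degree (c i) := by
    intro i
    rw [hdegV]
    calc rfun i = (S i).card := (hScard i).symm
      _ = ((S i : Finset V) : Set V).ncard := (Set.ncard_coe_finset _).symm
      _ ≤ (H.neighborSet (c i)).ncard := by
          refine Set.ncard_le_ncard ?_ (Set.toFinite _)
          intro v hv
          exact hstaradj i v (by simpa using hv)
  -- leaves
  set Lfin : Finset V := univ.filter (fun v => H.spanningCoe.degree v = 1) with hLdef
  have hLcard : (subgraphLeaves H).ncard = Lfin.card := by
    have himg : subgraphLeaves H = (Lfin : Set V) := by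
      ext v
      simp only [subgraphLeaves, Set.mem_setOf_eq, hLdef, Finset.coe_filter,
        Finset.mem_univ, true_and]
      constructor
      · rintro ⟨hv, hn⟩
        rw [hdegV]
        exact hn
      · intro hn
        exact ⟨hmemV v, by rw [← hdegV]; exact hn⟩
    rw [himg, Set.ncard_coe_finset]
  have hLr' : Lfin.card ≤ r := by rw [← hLcard]; exact hLr
  -- partition of the vertex set
  set Cfin : Finset V := univ.image c with hCdef
  have hCcard : Cfin.card = p := by
    rw [hCdef, Finset.card_image_of_injective _ hcinj, Finset.card_univ, Fintype.card_fin]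
  have hCL : Disjoint Cfin Lfin := by
    rw [Finset.disjoint_left]
    rintro w hw hwL
    obtain ⟨i, _, rfl⟩ := Finset.mem_image.mp hw
    have h3 := hdegc i
    have h4 := hr3 i
    have h5 := (Finset.mem_filter.mp hwL).2
    omega
  have hCsub : Cfin ⊆ univ := Finset.subset_univ _
  have hLsub : Lfin ⊆ univ \ Cfin := by
    intro w hw
    rw [Finset.mem_sdiff]
    exact ⟨Finset.mem_univ _, fun hc => Finset.disjoint_left.mp hCL hc hw⟩
  have hs1 : ∑ v ∈ univ \ Cfin, H.spanningCoe.degree v + ∑ v ∈ Cfin, H.spanningCoe.degree v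
      = ∑ v : V, H.spanningCoe.degree v := Finset.sum_sdiff hCsub
  have hs2 : ∑ v ∈ (univ \ Cfin) \ Lfin, H.spanningCoe.degree v
        + ∑ v ∈ Lfin, H.spanningCoe.degree v
      = ∑ v ∈ univ \ Cfin, H.spanningCoe.degree v := Finset.sum_sdiff hLsub
  have hcsum : ∑ i, rfun i ≤ ∑ v ∈ Cfin, H.spanningCoe.degree v := by
    have himg : ∑ v ∈ Cfin, H.spanningCoe.degree v
        = ∑ i : Fin p, H.spanningCoe.degree (c i) := by
      rw [hCdef]
      exact Finset.sum_image (fun i _ j _ h => hcinj h)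
    rw [himg]
    exact Finset.sum_le_sum (fun i _ => hdegc i)
  have hLsum : ∑ v ∈ Lfin, H.spanningCoe.degree v = Lfin.card := by
    rw [Finset.sum_congr rfl (fun w hw => (Finset.mem_filter.mp hw).2), Finset.sum_const,
      smul_eq_mul, mul_one]
  have hB2 : ∀ w ∈ (univ \ Cfin) \ Lfin, 2 ≤ H.spanningCoe.degree w := by
    intro w hw
    have h1 := hdeg1 w
    have h2 : ¬ (H.spanningCoe.degree w = 1) := by
      have := (Finset.mem_sdiff.mp hw).2
      simpa [hLdef] using this
    omega
  have hBsum : 2 * ((univ \ Cfin) \ Lfin).card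
      ≤ ∑ v ∈ (univ \ Cfin) \ Lfin, H.spanningCoe.degree v := by
    calc 2 * ((univ \ Cfin) \ Lfin).card = ∑ _v ∈ (univ \ Cfin) \ Lfin, 2 := by
          rw [Finset.sum_const, smul_eq_mul, mul_comm]
      _ ≤ _ := Finset.sum_le_sum hB2
  have hc1 : (univ \ Cfin).card + Cfin.card = Fintype.card V := by
    rw [Finset.card_sdiff_add_card_eq_card hCsub, Finset.card_univ]
  have hc2 : ((univ \ Cfin) \ Lfin).card + Lfin.card = (univ \ Cfin).card :=
    Finset.card_sdiff_add_card_eq_card hLsub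
  have h3p : 3 * p ≤ ∑ i, rfun i := by
    calc 3 * p = ∑ _i : Fin p, 3 := by
          rw [Finset.sum_const, Finset.card_univ, Fintype.card_fin, smul_eq_mul, mul_comm]
      _ ≤ ∑ i, rfun i := Finset.sum_le_sum (fun i _ => hr3 i)
  omega
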